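/- In a two-dimensional normed space with anti-norm ||·||_a defined via a symplectic form ω, if v is Birkhoff orthogonal to w with respect to the norm ||·||, then w is Birkhoff orthogonal to v with respect to the anti-norm ||·||_a (the anti-norm reverses Birkhoff orthogonality). -/

import Mathlib

noncomputable def antinorm {X : Type*} [NormedAddCommGroup X] [NormedSpace ℝ X]
    (ω : X →ₗ[ℝ] X →ₗ[ℝ] ℝ) (y : X) : ℝ :=
  sSup ((fun x => ω x y) '' {x : X | ‖x‖ ≤ 1})

lemma antinorm_aux_bdd {X : Type*} [NormedAddCommGroup X] [NormedSpace ℝ X]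
    [FiniteDimensional ℝ X] (ω : X →ₗ[ℝ] X →ₗ[ℝ] ℝ) (y : X) :
    BddAbove ((fun x => ω x y) '' {x : X | ‖x‖ ≤ 1}) := by
  set L := LinearMap.toContinuousLinearMap (ω.flip y) with hL
  refine ⟨‖L‖, ?_⟩
  rintro s ⟨x, hx, rfl⟩
  have h1 : ω x y = L x := rfl
  have h2 := L.le_opNorm x
  have : ‖L x‖ ≤ ‖L‖ := le_trans h2 (by
    have : ‖L‖ * ‖x‖ ≤ ‖L‖ * 1 := by
      apply mul_le_mul_of_nonneg_left hx (norm_nonneg L)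
    simpa using this)
  calc ω x y ≤ ‖L x‖ := by rw [h1]; exact le_abs_self _
    _ ≤ ‖L‖ := this

lemma antinorm_aux_mem {X : Type*} [NormedAddCommGroup X] [NormedSpace ℝ X]
    (ω : X →ₗ[ℝ] X →ₗ[ℝ] ℝ) (y : X) (x : X) (hx : ‖x‖ ≤ 1) :
    ω x y ∈ ((fun x => ω x y) '' {x : X | ‖x‖ ≤ 1}) :=
  ⟨x, hx, rfl⟩

theorem antinorm_reverses_birkhoff {X : Type*} [NormedAddCommGroup X] [NormedSpace ℝ X]
    (hdim : Module.finrank ℝ X = 2)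
    (ω : X →ₗ[ℝ] X →ₗ[ℝ] ℝ)
    (halt : ∀ x : X, ω x x = 0)
    (hnd : ∀ x : X, (∀ y : X, ω x y = 0) → x = 0)
    (v w : X)
    (hB : ∀ l : ℝ, ‖v‖ ≤ ‖v + l • w‖) :
    ∀ l : ℝ, antinorm ω w ≤ antinorm ω (w + l • v) := by
  have hfd : FiniteDimensional ℝ X := FiniteDimensional.of_finrank_pos (by omega)
  have skew : ∀ x y : X, ω y x = - ω x y := by
    intro x y
    have h := halt (x + y)
    simp only [map_add, LinearMap.add_apply, halt] at h
    linarith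
  have hzero : ∀ x : X, (0:ℝ) ∈ ((fun z => ω z x) '' {z : X | ‖z‖ ≤ 1}) := by
    intro x
    exact ⟨0, by simp, by simp⟩
  have hnonneg : ∀ x : X, 0 ≤ antinorm ω x := fun x =>
    le_csSup (antinorm_aux_bdd ω x) (hzero x)
  intro l
  by_cases hv : v = 0
  · simp [hv]
  by_cases hdep : ∃ k : ℝ, w = k • v
  · obtain ⟨k, rfl⟩ := hdep
    have hk : k = 0 := by
      by_contra hk
      have := hB (-1/k)
      rw [smul_smul] at this
      have h2 : (-1/k) * k = -1 := by field_simp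
      rw [h2] at this
      simp at this
      exact hv this
    subst hk
    have h1 : antinorm ω ((0:ℝ) • v) ≤ 0 := by
      apply csSup_le ⟨0, hzero _⟩
      rintro s ⟨x, hx, rfl⟩
      simp
    exact le_trans h1 (hnonneg _)
  · -- v, w linearly independent
    push_neg at hdep
    have hli : LinearIndependent ℝ ![v, w] := by
      rw [LinearIndependent.pair_iff]
      intro s t hst
      by_cases ht : t = 0
      · subst ht
        simp at hst
        rcases hst with h | h
        · exact ⟨h, rfl⟩
        · exact absurd h hv
      · exfalso
        apply hdep (-s/t)
        have : w = (-s/t) • v := by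
          have : t • w = (-s) • v := by
            rw [neg_smul]
            linear_combination (norm := module) hst
          calc w = t⁻¹ • (t • w) := by rw [smul_smul, inv_mul_cancel₀ ht, one_smul]
            _ = t⁻¹ • ((-s) • v) := by rw [this]
            _ = (-s/t) • v := by rw [smul_smul]; ring_nf
        exact this
    have hspan : Submodule.span ℝ {v, w} = ⊤ := by
      have := hli.span_eq_top_of_card_eq_finrank (by simp [hdim])
      rwa [show Set.range ![v, w] = {v, w} by
        ext z; simp only [Set.mem_range, Fin.exists_fin_two, Matrix.cons_val_zero, Matrix.cons_val_one, Matrix.head_cons, Set.mem_insert_iff, Set.mem_singleton_iff]; tauto] at this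
    have hall : ∀ x : X, ω x v = 0 → ω x w = 0 → x = 0 := by
      intro x h1 h2
      apply hnd
      intro y
      have hy : y ∈ Submodule.span ℝ {v, w} := by rw [hspan]; trivial
      induction hy using Submodule.span_induction with
      | mem z hz => rcases hz with rfl | rfl; exact h1; exact h2
      | zero => simp
      | add a b _ _ ha hb => simp [ha, hb]
      | smul c a _ ha => simp [ha]
    set c := ω v w with hc
    have hcne : c ≠ 0 := by
      intro h
      apply hv
      exact hall v (halt v) h
    have hnv : (0:ℝ) < ‖v‖ := norm_pos_iff.mpr hv
    -- decomposition
    have hdecomp : ∀ x : X, x = (ω x w / c) • v + (ω v x / c) • w := by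
      intro x
      have hy : x - (ω x w / c) • v - (ω v x / c) • w = 0 := by
        apply hall
        · simp only [map_sub, map_smul, LinearMap.sub_apply, LinearMap.smul_apply,
            smul_eq_mul, halt]
          rw [skew v w]  -- ω w v = -ω v w? skew: ω y x = -ω x y; skew v w : ω w v = - ω v w
          field_simp [hcne]
          rw [skew x v]
          ring
        · simp only [map_sub, map_smul, LinearMap.sub_apply, LinearMap.smul_apply,
            smul_eq_mul, halt]
          field_simp [hcne]
          rw [hc]; ring
      rw [sub_sub, sub_eq_zero] at hy
      exact hy
    -- upper bound on each element of S_w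
    have hub : ∀ s ∈ ((fun x => ω x w) '' {x : X | ‖x‖ ≤ 1}), s ≤ |c| / ‖v‖ := by
      rintro s ⟨x, hx, rfl⟩
      set a := ω x w / c with ha
      set b := ω v x / c with hb
      have hxab : x = a • v + b • w := hdecomp x
      have habs : |a| * ‖v‖ ≤ 1 := by
        by_cases haz : a = 0
        · simp [haz]
        · have h1 := hB (b / a)
          have h2 : ‖a • v + b • w‖ = |a| * ‖v + (b/a) • w‖ := by
            rw [← Real.norm_eq_abs, ← norm_smul]
            congr 1
            rw [smul_add, smul_smul]
            field_simp
          have h3 : |a| * ‖v‖ ≤ |a| * ‖v + (b/a) • w‖ := by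
            apply mul_le_mul_of_nonneg_left h1 (abs_nonneg a)
          rw [← h2, ← hxab] at h3
          exact le_trans h3 hx
      have hs : ω x w = a * c := by rw [ha]; field_simp
      show ω x w ≤ |c| / ‖v‖
      rw [hs]
      calc a * c ≤ |a * c| := le_abs_self _
        _ = |a| * |c| := abs_mul a c
        _ ≤ (1 / ‖v‖) * |c| := by
            apply mul_le_mul_of_nonneg_right _ (abs_nonneg c)
            rw [le_div_iff₀ hnv] at *
            linarith [habs]
        _ = |c| / ‖v‖ := by ring
    -- lower bound for S_{w + l v}
    have hlb : |c| / ‖v‖ ≤ antinorm ω (w + l • v) := by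
      set σ : ℝ := if 0 ≤ c then 1 else -1 with hσ
      have hσ1 : |σ| = 1 := by
        rcases le_or_gt 0 c with h | h
        · simp [hσ, h]
        · simp [hσ, not_le.mpr h]
      have hx0 : ‖(σ / ‖v‖) • v‖ ≤ 1 := by
        have : ‖(σ / ‖v‖) • v‖ = 1 := by
          rw [norm_smul, Real.norm_eq_abs, abs_div, hσ1, abs_norm, one_div,
            inv_mul_cancel₀ (ne_of_gt hnv)]
        exact le_of_eq this
      have hval : ω ((σ / ‖v‖) • v) (w + l • v) = |c| / ‖v‖ := by
        simp only [map_smul, map_add, LinearMap.smul_apply, LinearMap.add_apply,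
          map_smul, smul_eq_mul, halt]
        rw [← hc]
        have : σ * c = |c| := by
          rcases le_or_gt 0 c with h | h
          · simp [hσ, h, abs_of_nonneg h]
          · simp [hσ, not_le.mpr h, abs_of_neg h]
        field_simp
        linarith [this]
      rw [← hval]
      exact le_csSup (antinorm_aux_bdd ω _) ⟨_, hx0, rfl⟩
    calc antinorm ω w ≤ |c| / ‖v‖ := csSup_le ⟨0, hzero _⟩ hub
      _ ≤ antinorm ω (w + l • v) := hlb
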